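/- Fix n ≥ 1, and on (ℂ²)^{⊗n} ≅ ℂ^{2^n} let Z_i denote Pauli Z = [[1,0],[0,−1]] acting on the i-th tensor factor and A_i denote the lowering matrix A = [[0,0],[1,0]] acting on the i-th tensor factor (each tensored with identity elsewhere). For complex numbers c, c₁,…,cₙ, d₁,…,dₙ, let O := c·I + Σ_{i=1}^n (c_i Z_i + d_i A_i). Then det O = Π_{σ ∈ {−1,+1}^n} (c + Σ_{i=1}^n c_i σ_i). In particular, the least singular value of O is zero (O is singular) if and only if c + Σ_i c_i σ_i = 0 for some sign vector σ ∈ {−1,+1}^n. -/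

import Mathlib

open scoped BigOperators

/-- Pauli Z matrix. -/
def pauliZ : Matrix (Fin 2) (Fin 2) ℂ := !![1, 0; 0, -1]

/-- The lowering matrix `A = [[0,0],[1,0]]`. -/
def lowerA : Matrix (Fin 2) (Fin 2) ℂ := !![0, 0; 1, 0]

/-- The 2×2 matrix `M` acting on the `i`-th tensor factor of `(ℂ²)^{⊗n} ≅ ℂ^{2^n}`,
i.e. `I₂^{⊗(i−1)} ⊗ M ⊗ I₂^{⊗(n−i)}`, realizing `ℂ^{2^n}` as functions `Fin n → Fin 2`. -/
def onFactor {n : ℕ} (M : Matrix (Fin 2) (Fin 2) ℂ) (i : Fin n) :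
    Matrix (Fin n → Fin 2) (Fin n → Fin 2) ℂ :=
  Matrix.of fun f g => ∏ j, (if j = i then M else 1) (f j) (g j)


lemma onFactor_diag {n : ℕ} (M : Matrix (Fin 2) (Fin 2) ℂ) (i : Fin n) (f : Fin n → Fin 2) :
    onFactor M i f f = M (f i) (f i) := by
  show (∏ j, (if j = i then M else 1) (f j) (f j)) = _
  rw [Finset.prod_eq_single i]
  · simp
  · intro j _ hj
    simp [hj, Matrix.one_apply_eq]
  · simp

lemma pauliZ_diag (x : Fin 2) : pauliZ x x = if x = 0 then 1 else -1 := by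
  have h : x = 0 ∨ x = 1 := by omega
  rcases h with h | h <;> simp [h, pauliZ]

lemma lowerA_diag (x : Fin 2) : lowerA x x = 0 := by
  have h : x = 0 ∨ x = 1 := by omega
  rcases h with h | h <;> simp [h, lowerA]

lemma pauliZ_off (x y : Fin 2) (h : x ≠ y) : pauliZ x y = 0 := by
  have hx : x = 0 ∨ x = 1 := by omega
  have hy : y = 0 ∨ y = 1 := by omega
  rcases hx with hx | hx <;> rcases hy with hy | hy <;>
    simp [hx, hy, pauliZ] <;> simp [hx, hy] at h

lemma lowerA_ne (x y : Fin 2) (h : lowerA x y ≠ 0) : x = 1 ∧ y = 0 := by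
  have hx : x = 0 ∨ x = 1 := by omega
  have hy : y = 0 ∨ y = 1 := by omega
  rcases hx with hx | hx <;> rcases hy with hy | hy <;>
    simp [hx, hy, lowerA] at h ⊢

lemma onFactorZ_off {n : ℕ} (i : Fin n) (f g : Fin n → Fin 2) (h : f ≠ g) :
    onFactor pauliZ i f g = 0 := by
  obtain ⟨j, hj⟩ : ∃ j, f j ≠ g j := Function.ne_iff.mp h
  show (∏ k, (if k = i then pauliZ else 1) (f k) (g k)) = 0
  apply Finset.prod_eq_zero (Finset.mem_univ j)
  by_cases hji : j = i
  · simp [hji, pauliZ_off _ _ (hji ▸ hj)]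
  · simp [hji, Matrix.one_apply_ne hj]

lemma onFactorA_ne {n : ℕ} (i : Fin n) (f g : Fin n → Fin 2)
    (h : onFactor lowerA i f g ≠ 0) :
    (∀ j, j ≠ i → f j = g j) ∧ f i = 1 ∧ g i = 0 := by
  have h' : ∀ j, (if j = i then lowerA else 1) (f j) (g j) ≠ 0 := by
    intro j hj0
    exact h (Finset.prod_eq_zero (Finset.mem_univ j) hj0)
  constructor
  · intro j hj
    have := h' j
    simp only [hj, if_neg] at this
    by_contra hne
    exact this (Matrix.one_apply_ne hne)
  · have := h' i
    simp only [if_pos rfl] at this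
    exact lowerA_ne _ _ this

def boolFin : Bool ≃ Fin 2 :=
  ⟨fun b => if b then 0 else 1, fun x => x = 0, by decide, by decide⟩

theorem stmt15 (n : ℕ) (hn : 1 ≤ n) (c : ℂ) (cs ds : Fin n → ℂ) :
    let O : Matrix (Fin n → Fin 2) (Fin n → Fin 2) ℂ :=
      c • 1 + ∑ i, (cs i • onFactor pauliZ i + ds i • onFactor lowerA i)
    O.det = (∏ σ : Fin n → Bool, (c + ∑ i, cs i * (if σ i then 1 else -1))) ∧
      (O.det = 0 ↔ ∃ σ : Fin n → Bool, c + ∑ i, cs i * (if σ i then 1 else -1) = 0) := by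
  intro O
  letI : LinearOrder (Lex (Fin n → Fin 2)) :=
    @Pi.Lex.linearOrder _ _ _ Finite.to_wellFoundedLT _
  have hdiag : ∀ f : Fin n → Fin 2,
      O f f = c + ∑ i, cs i * (if f i = 0 then 1 else -1) := by
    intro f
    simp only [O]
    simp [Matrix.add_apply, Matrix.sum_apply, Matrix.one_apply_eq,
      onFactor_diag, pauliZ_diag, lowerA_diag]
  have hoff : ∀ f g : Fin n → Fin 2, toLex f < toLex g → O f g = 0 := by
    intro f g hlt
    have hfg : f ≠ g := by
      rintro rfl; exact lt_irrefl _ hlt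
    have hA : ∀ i, onFactor lowerA i f g = 0 := by
      intro i
      by_contra h0
      obtain ⟨hoffi, hf1, hg0⟩ := onFactorA_ne i f g h0
      have : toLex g < toLex f := by
        refine ⟨i, fun j hj => (hoffi j (ne_of_lt hj)).symm, ?_⟩
        show g i < f i
        rw [hf1, hg0]; decide
      exact lt_asymm hlt this
    simp only [O]
    simp [Matrix.add_apply, Matrix.sum_apply, Matrix.one_apply_ne hfg,
      onFactorZ_off _ _ _ hfg, hA]
  -- reindex to Lex and use lower triangularity
  have hdet : O.det = ∏ f : Fin n → Fin 2, O f f := by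
    have h1 : (O.submatrix (ofLex : Lex (Fin n → Fin 2) ≃ (Fin n → Fin 2))
        (ofLex : Lex (Fin n → Fin 2) ≃ (Fin n → Fin 2))).det = O.det :=
      Matrix.det_submatrix_equiv_self _ _
    rw [← h1, Matrix.det_of_lowerTriangular]
    · exact Fintype.prod_equiv (ofLex : Lex (Fin n → Fin 2) ≃ _) _ _ (fun _ => rfl)
    · intro i j hij
      exact hoff (ofLex i) (ofLex j) hij
  have hprod : O.det = ∏ σ : Fin n → Bool, (c + ∑ i, cs i * (if σ i then 1 else -1)) := by
    rw [hdet]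
    refine (Fintype.prod_equiv (Equiv.piCongrRight fun _ => boolFin) _ _ fun σ => ?_).symm
    rw [hdiag]
    congr 1
    refine Finset.sum_congr rfl fun i _ => ?_
    congr 1
    by_cases hb : σ i <;> simp [hb, Equiv.piCongrRight, boolFin]
  refine ⟨hprod, ?_⟩
  rw [hprod, Finset.prod_eq_zero_iff]
  constructor
  · rintro ⟨σ, _, hσ⟩; exact ⟨σ, hσ⟩
  · rintro ⟨σ, hσ⟩; exact ⟨σ, Finset.mem_univ σ, hσ⟩
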